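/- Let r ≥ 1 and s ≥ 1 be integers, g = (r+1)(s+1), d = r(s+2), and N = (∏_{i=0}^r i!)·g! / ∏_{i=0}^r (s+1+i)!. Define a₀ = 1, a₁ = 3, and a_i = i+3 for 2 ≤ i ≤ r. Then (g−3)! · ∏_{0 ≤ i < j ≤ r} (a_j − a_i) / ∏_{i=0}^r (g−3−d+r+a_i)! = d(2g−2−d)N / (3(g−1)(g−2)), an identity of positive rational numbers (all factorial arguments g−3−d+r+a_i = s−2+a_i are nonnegative). -/

import Mathlib

open Finset

lemma prod_sub_nat (m : ℕ) : ∏ i ∈ range m, (m - i) = m.factorial := by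
  rw [← Finset.prod_range_reflect]
  have : ∀ j ∈ range m, m - (m - 1 - j) = j + 1 := by
    intro j hj; have := mem_range.mp hj; omega
  rw [Finset.prod_congr rfl this]
  exact Finset.prod_range_add_one_eq_factorial m

lemma prod_sub_q (m : ℕ) : ∏ i ∈ range m, ((m : ℚ) - i) = m.factorial := by
  rw [← prod_sub_nat m, Nat.cast_prod]
  refine Finset.prod_congr rfl fun i hi => ?_
  rw [Nat.cast_sub (le_of_lt (mem_range.mp hi))]

lemma auxV (a : ℕ → ℕ) (ha0 : a 0 = 1) (ha1 : a 1 = 3) :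
    ∀ r, 1 ≤ r → (∀ i, 2 ≤ i → i ≤ r → a i = i + 3) →
    3 * (∏ j ∈ Finset.range (r+1), ∏ i ∈ Finset.range j, ((a j : ℚ) - (a i : ℚ)))
      = (r : ℚ) * (r+1) * (r+2) * ∏ i ∈ Finset.range (r+1), (Nat.factorial i : ℚ) := by
  refine Nat.le_induction ?_ ?_
  · intro _
    simp [Finset.prod_range_succ, ha0, ha1]
    norm_num
  · intro n hn IH hup
    have hupn : ∀ i, 2 ≤ i → i ≤ n → a i = i + 3 := fun i h2 hle => hup i h2 (hle.trans (Nat.le_succ n))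
    have IH' := IH hupn
    obtain ⟨m, rfl⟩ : ∃ m, n = m + 1 := ⟨n - 1, by omega⟩
    have han1 : a (m + 2) = m + 5 := hup (m+2) (by omega) le_rfl
    have hinner : ∏ i ∈ Finset.range (m+2), ((a (m+2) : ℚ) - (a i : ℚ))
        = ((m:ℚ)+4) * ((m:ℚ)+2) * (Nat.factorial m : ℚ) := by
      rw [Finset.prod_range_succ', Finset.prod_range_succ']
      have ht : ∀ i ∈ Finset.range m, ((a (m+2) : ℚ) - (a (i+1+1) : ℚ)) = ((m:ℚ) - i) := by
        intro i hi
        have := mem_range.mp hi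
        rw [han1, hup (i+1+1) (by omega) (by omega)]
        push_cast; ring
      rw [Finset.prod_congr rfl ht, prod_sub_q, han1, ha0, ha1]
      push_cast; ring
    rw [Finset.prod_range_succ, Finset.prod_range_succ
      (f := fun i => (Nat.factorial i : ℚ)) (n := m + 2), hinner]
    have hfac : (Nat.factorial (m+2) : ℚ) = ((m:ℚ)+2) * ((m:ℚ)+1) * (Nat.factorial m : ℚ) := by
      rw [Nat.factorial_succ, Nat.factorial_succ]; push_cast; ring
    rw [hfac]
    push_cast at IH' ⊢
    linear_combination (((m:ℚ)+4) * ((m:ℚ)+2) * (Nat.factorial m : ℚ)) * IH'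

lemma auxP (s : ℕ) (hs : 1 ≤ s) (a : ℕ → ℕ) (ha0 : a 0 = 1) (ha1 : a 1 = 3)
    (r : ℕ) (hr : 1 ≤ r) (ha : ∀ i, 2 ≤ i → i ≤ r → a i = i + 3) :
    ∏ i ∈ Finset.range (r+1), Nat.factorial (s+1+i)
      = s * (s+1) * (s+2) * ∏ i ∈ Finset.range (r+1), Nat.factorial (s + a i - 2) := by
  obtain ⟨m, rfl⟩ : ∃ m, r = m + 1 := ⟨r - 1, by omega⟩
  obtain ⟨t, rfl⟩ : ∃ t, s = t + 1 := ⟨s - 1, by omega⟩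
  rw [Finset.prod_range_succ' (f := fun i => Nat.factorial (t+1+1+i)),
    Finset.prod_range_succ',
    Finset.prod_range_succ' (f := fun i => Nat.factorial (t+1 + a i - 2)),
    Finset.prod_range_succ']
  have ht : ∀ i ∈ Finset.range m, Nat.factorial (t+1+1+(i+1+1)) = Nat.factorial (t+1 + a (i+1+1) - 2) := by
    intro i hi
    have him := Finset.mem_range.mp hi
    rw [ha (i+1+1) (by omega) (by omega), show t+1+1+(i+1+1) = t+1+(i+1+1+3)-2 by omega]
  rw [Finset.prod_congr rfl ht, ha0, ha1]
  have h1 : t + 1 + 1 - 2 = t := by omega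
  have h2 : t + 1 + 3 - 2 = t + 2 := by omega
  rw [h1, h2]
  have h3 : Nat.factorial (t+1+1+0) = (t+2) * (t+1) * Nat.factorial t := by
    simp [Nat.factorial_succ]; ring
  have h4 : Nat.factorial (t+1+1+1) = (t+3) * (t+2) * (t+1) * Nat.factorial t := by
    simp [Nat.factorial_succ]; ring
  rw [h3, h4]
  ring

theorem schubert_evaluation_class_a (r s : ℕ) (hr : 1 ≤ r) (hs : 1 ≤ s)
    (g d : ℕ) (hg : g = (r + 1) * (s + 1)) (hd : d = r * (s + 2))
    (N : ℚ)
    (hN : N = (((∏ i ∈ Finset.range (r + 1), Nat.factorial i) *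
        Nat.factorial g : ℕ) : ℚ) /
      ((∏ i ∈ Finset.range (r + 1), Nat.factorial (s + 1 + i) : ℕ) : ℚ))
    (a : ℕ → ℕ) (ha0 : a 0 = 1) (ha1 : a 1 = 3)
    (ha : ∀ i, 2 ≤ i → i ≤ r → a i = i + 3) :
    (Nat.factorial (g - 3) : ℚ) *
        (∏ j ∈ Finset.range (r + 1), ∏ i ∈ Finset.range j,
          ((a j : ℚ) - (a i : ℚ))) /
        (∏ i ∈ Finset.range (r + 1),
          (Nat.factorial (g + r + a i - (d + 3)) : ℚ))
      = (d : ℚ) * (2 * (g : ℚ) - 2 - (d : ℚ)) * N /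
        (3 * ((g : ℚ) - 1) * ((g : ℚ) - 2)) ∧
    0 < (d : ℚ) * (2 * (g : ℚ) - 2 - (d : ℚ)) * N /
        (3 * ((g : ℚ) - 1) * ((g : ℚ) - 2)) := by
  have hg4 : 4 ≤ g := by
    rw [hg]; calc 4 = 2 * 2 := rfl
      _ ≤ (r+1) * (s+1) := Nat.mul_le_mul (by omega) (by omega)
  have hgd : g + r = d + s + 1 := by subst hg hd; ring
  have hai : ∀ i, i ≤ r → 1 ≤ a i := by
    intro i hi
    match i with
    | 0 => omega
    | 1 => omega
    | (k+2) => rw [ha (k+2) (by omega) hi]; omega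
  have harg : ∀ i ∈ Finset.range (r+1), g + r + a i - (d + 3) = s + a i - 2 := by
    intro i hi
    have h2 := Finset.mem_range.mp hi
    have h1 := hai i (by omega)
    omega
  have hDrw : (∏ i ∈ Finset.range (r+1), (Nat.factorial (g + r + a i - (d + 3)) : ℚ))
      = ∏ i ∈ Finset.range (r+1), (Nat.factorial (s + a i - 2) : ℚ) :=
    Finset.prod_congr rfl (fun i hi => by rw [harg i hi])
  have hP : (∏ i ∈ Finset.range (r+1), (Nat.factorial (s+1+i) : ℚ))
      = (s:ℚ) * ((s:ℚ)+1) * ((s:ℚ)+2)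
        * ∏ i ∈ Finset.range (r+1), (Nat.factorial (s + a i - 2) : ℚ) := by
    exact_mod_cast congrArg (Nat.cast (R := ℚ)) (auxP s hs a ha0 ha1 r hr ha)
  have hV := auxV a ha0 ha1 r hr ha
  have hQpos : 0 < ∏ i ∈ Finset.range (r+1), (Nat.factorial i : ℚ) :=
    Finset.prod_pos fun i _ => by positivity
  have hV' : (∏ j ∈ Finset.range (r+1), ∏ i ∈ Finset.range j, ((a j : ℚ) - (a i : ℚ)))
      = (r:ℚ) * ((r:ℚ)+1) * ((r:ℚ)+2)
        * (∏ i ∈ Finset.range (r+1), (Nat.factorial i : ℚ)) / 3 := by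
    linear_combination hV / 3
  obtain ⟨k, rfl⟩ : ∃ k, g = k + 4 := ⟨g - 4, by omega⟩
  have hgfac : (Nat.factorial (k+4) : ℚ)
      = ((k:ℚ)+4) * ((k:ℚ)+3) * ((k:ℚ)+2) * (Nat.factorial (k+1) : ℚ) := by
    have h : Nat.factorial (k+4) = (k+4) * ((k+3) * ((k+2) * Nat.factorial (k+1))) := rfl
    rw [h]; push_cast; ring
  have hgq : ((k:ℚ)+4) = ((r:ℚ)+1) * ((s:ℚ)+1) := by exact_mod_cast hg
  have hk : (k:ℚ) = (r:ℚ)*(s:ℚ) + (r:ℚ) + (s:ℚ) - 3 := by linear_combination hgq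
  have hdq : (d:ℚ) = (r:ℚ) * ((s:ℚ)+2) := by rw [hd]; push_cast; ring
  have hDpos : 0 < ∏ i ∈ Finset.range (r+1), (Nat.factorial (s + a i - 2) : ℚ) :=
    Finset.prod_pos fun i _ => by positivity
  have hrq : (1:ℚ) ≤ (r:ℚ) := by exact_mod_cast hr
  have hsq : (1:ℚ) ≤ (s:ℚ) := by exact_mod_cast hs
  have hF3 : (0:ℚ) < (Nat.factorial (k+4-3) : ℚ) := by positivity
  have heq : (Nat.factorial (k+4-3) : ℚ) *
        (∏ j ∈ Finset.range (r+1), ∏ i ∈ Finset.range j, ((a j : ℚ) - (a i : ℚ))) /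
        (∏ i ∈ Finset.range (r+1), (Nat.factorial (k+4 + r + a i - (d+3)) : ℚ))
      = (d : ℚ) * (2 * ((k+4 : ℕ) : ℚ) - 2 - (d : ℚ)) * N /
        (3 * (((k+4 : ℕ) : ℚ) - 1) * (((k+4 : ℕ) : ℚ) - 2)) := by
    rw [hDrw, hN, hV']
    push_cast
    rw [hP, hgfac, hdq, hk]
    have d1 : ((r:ℚ)*(s:ℚ) + (r:ℚ) + (s:ℚ) - 3 + 4 - 1 : ℚ) ≠ 0 := by nlinarith
    have d2 : ((r:ℚ)*(s:ℚ) + (r:ℚ) + (s:ℚ) - 3 + 4 - 2 : ℚ) ≠ 0 := by nlinarith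
    have d3 : (s:ℚ) ≠ 0 := by linarith
    have d4 : (s:ℚ) + 1 ≠ 0 := by linarith
    have d5 : (s:ℚ) + 2 ≠ 0 := by linarith
    have d6 : (∏ i ∈ Finset.range (r+1), (Nat.factorial (s + a i - 2) : ℚ)) ≠ 0 :=
      ne_of_gt hDpos
    field_simp
    have d7 : ((r:ℚ) * ((s:ℚ) + 1) + (s:ℚ) - 3 + 4 - 1) ≠ 0 := by
      convert d1 using 1; ring
    have d8 : ((r:ℚ) * ((s:ℚ) + 1) + (s:ℚ) - 3 + 4 - 2) ≠ 0 := by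
      convert d2 using 1; ring
    field_simp
    ring
  refine ⟨heq, ?_⟩
  rw [← heq, hDrw, hV']
  apply div_pos
  · apply mul_pos hF3
    apply div_pos _ (by norm_num)
    exact mul_pos (mul_pos (mul_pos (by linarith) (by linarith)) (by linarith)) hQpos
  · exact hDpos
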